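/- In the real-valued one-step BDAR(1) setup, assume additionally that E[ε1] = E[Z1p] = μ1, E[ε2] = E[Z2p] = μ2, that φ12 < 1, and the stationarity condition E[Z1·Z2] = E[Z1p·Z2p]. Then the contemporaneous cross-covariance satisfies Cov(Z1, Z2) = (1 − φ1 − φ2 + φ12)·(E[ε1·ε2] − μ1·μ2) / (1 − φ12). -/

import Mathlib

open MeasureTheory ProbabilityTheory

section Aux

variable {Ω : Type*} [MeasurableSpace Ω] {P : Measure Ω} [IsProbabilityMeasure P]

/-- Bounded measurable functions are integrable on a probability space. -/
lemma bdar_integrable (h : Ω → ℝ) (hm : Measurable h) (C : ℝ) (hb : ∀ ω, |h ω| ≤ C) :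
    Integrable h P := by
  refine (integrable_const C).mono' hm.aestronglyMeasurable (ae_of_all _ ?_)
  simpa [Real.norm_eq_abs] using hb

/-- Integral of a function of an independent pair times a bounded function factorizes. -/
lemma bdar_indep_mul {α : Ω → Bool × Bool} {q : Ω → ℝ × ℝ × ℝ × ℝ}
    (hαm : Measurable α) (hqm : Measurable q) (hα : IndepFun α q P)
    (f : Bool × Bool → ℝ) (g : ℝ × ℝ × ℝ × ℝ → ℝ) (hgm : Measurable g)
    (C : ℝ) (hb : ∀ ω, |g (q ω)| ≤ C) :
    ∫ ω, f (α ω) * g (q ω) ∂P = (∫ ω, f (α ω) ∂P) * ∫ ω, g (q ω) ∂P := by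
  have hcomp : IndepFun (fun ω => f (α ω)) (fun ω => g (q ω)) P :=
    hα.comp (measurable_of_countable f) hgm
  have hD : ∀ ω, |f (α ω)| ≤ |f (true, true)| + |f (true, false)| + |f (false, true)|
      + |f (false, false)| := by
    intro ω
    have h1 := abs_nonneg (f (true, true))
    have h2 := abs_nonneg (f (true, false))
    have h3 := abs_nonneg (f (false, true))
    have h4 := abs_nonneg (f (false, false))
    rcases hp : α ω with ⟨a, b⟩
    cases a <;> cases b <;> linarith
  exact hcomp.integral_mul_eq_mul_integral
    (bdar_integrable (fun ω => f (α ω)) ((measurable_of_countable f).comp hαm) _ hD).aestronglyMeasurable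
    (bdar_integrable (fun ω => g (q ω)) (hgm.comp hqm) C hb).aestronglyMeasurable

/-- Integral of a boolean indicator. -/
lemma bdar_indicator_integral {g : Ω → ℝ} {s : Set Ω} (hs : MeasurableSet s)
    (hg : ∀ ω, (ω ∈ s → g ω = 1) ∧ (ω ∉ s → g ω = 0)) :
    ∫ ω, g ω ∂P = (P s).toReal := by
  have : g = s.indicator (fun _ => (1 : ℝ)) := by
    ext ω
    by_cases h : ω ∈ s
    · rw [(hg ω).1 h, Set.indicator_of_mem h]
    · rw [(hg ω).2 h, Set.indicator_of_notMem h]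
  rw [this]
  exact integral_indicator_one (μ := P) hs

end Aux

/-- **Contemporaneous cross-covariance of the stationary BDAR(1) model.**
In the real-valued one-step BDAR(1) setup, assuming `E[ε1] = E[Z1p] = μ1`,
`E[ε2] = E[Z2p] = μ2`, `φ12 < 1`, and the stationarity condition
`E[Z1·Z2] = E[Z1p·Z2p]`, we have
`Cov(Z1, Z2) = (1 - φ1 - φ2 + φ12)·(E[ε1·ε2] - μ1·μ2) / (1 - φ12)`. -/
theorem bdar1_cross_covariance_lag0
    {Ω : Type*} [MeasurableSpace Ω] (P : Measure Ω) [IsProbabilityMeasure P]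
    (Z1p Z2p ε1 ε2 : Ω → ℝ) (α : Ω → Bool × Bool)
    (hZ1pm : Measurable Z1p) (hZ2pm : Measurable Z2p)
    (hε1m : Measurable ε1) (hε2m : Measurable ε2) (hαm : Measurable α)
    (hZ1pb : ∃ C, ∀ ω, |Z1p ω| ≤ C) (hZ2pb : ∃ C, ∀ ω, |Z2p ω| ≤ C)
    (hε1b : ∃ C, ∀ ω, |ε1 ω| ≤ C) (hε2b : ∃ C, ∀ ω, |ε2 ω| ≤ C)
    -- α is independent of the quadruple (Z1p, Z2p, ε1, ε2)
    (hα : IndepFun α (fun ω => (Z1p ω, Z2p ω, ε1 ω, ε2 ω)) P)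
    -- (ε1, ε2) is independent of (Z1p, Z2p)
    (hε : IndepFun (fun ω => (ε1 ω, ε2 ω)) (fun ω => (Z1p ω, Z2p ω)) P)
    (Z1 Z2 : Ω → ℝ)
    (hZ1 : ∀ ω, Z1 ω = if (α ω).1 then Z1p ω else ε1 ω)
    (hZ2 : ∀ ω, Z2 ω = if (α ω).2 then Z2p ω else ε2 ω)
    (φ1 φ2 φ12 : ℝ)
    (hφ1 : φ1 = (P {ω | (α ω).1 = true}).toReal)
    (hφ2 : φ2 = (P {ω | (α ω).2 = true}).toReal)
    (hφ12 : φ12 = (P {ω | α ω = (true, true)}).toReal)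
    (μ1 μ2 : ℝ)
    (hμ1ε : ∫ ω, ε1 ω ∂P = μ1) (hμ1Z : ∫ ω, Z1p ω ∂P = μ1)
    (hμ2ε : ∫ ω, ε2 ω ∂P = μ2) (hμ2Z : ∫ ω, Z2p ω ∂P = μ2)
    (hφ12lt : φ12 < 1)
    -- stationarity condition
    (hstat : ∫ ω, Z1 ω * Z2 ω ∂P = ∫ ω, Z1p ω * Z2p ω ∂P) :
    (∫ ω, Z1 ω * Z2 ω ∂P) - (∫ ω, Z1 ω ∂P) * (∫ ω, Z2 ω ∂P)
      = (1 - φ1 - φ2 + φ12) * ((∫ ω, ε1 ω * ε2 ω ∂P) - μ1 * μ2) / (1 - φ12) := by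
  obtain ⟨C1, hC1⟩ := hZ1pb
  obtain ⟨C2, hC2⟩ := hZ2pb
  obtain ⟨D1, hD1⟩ := hε1b
  obtain ⟨D2, hD2⟩ := hε2b
  set q : Ω → ℝ × ℝ × ℝ × ℝ := fun ω => (Z1p ω, Z2p ω, ε1 ω, ε2 ω) with hq
  have hqm : Measurable q := hZ1pm.prodMk (hZ2pm.prodMk (hε1m.prodMk hε2m))
  -- indicator functions on Bool × Bool
  set f1 : Bool × Bool → ℝ := fun p => if p.1 = true then 1 else 0 with hf1
  set f2 : Bool × Bool → ℝ := fun p => if p.2 = true then 1 else 0 with hf2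
  set ftt : Bool × Bool → ℝ := fun p => if p = (true, true) then 1 else 0 with hftt
  -- bounds on indicator functions
  have hf1b : ∀ p, |f1 p| ≤ 2 := by
    intro p; rcases p with ⟨a, b⟩; cases a <;> cases b <;> simp [hf1] <;> norm_num
  have hf2b : ∀ p, |f2 p| ≤ 2 := by
    intro p; rcases p with ⟨a, b⟩; cases a <;> cases b <;> simp [hf2] <;> norm_num
  have hfttb : ∀ p, |ftt p| ≤ 2 := by
    intro p; rcases p with ⟨a, b⟩; cases a <;> cases b <;> simp [hftt] <;> norm_num
  -- integrability of indicators
  have hf1int : Integrable (fun ω => f1 (α ω)) P :=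
    bdar_integrable _ ((measurable_of_countable f1).comp hαm) 2 fun ω => hf1b _
  have hf2int : Integrable (fun ω => f2 (α ω)) P :=
    bdar_integrable _ ((measurable_of_countable f2).comp hαm) 2 fun ω => hf2b _
  have hfttint : Integrable (fun ω => ftt (α ω)) P :=
    bdar_integrable _ ((measurable_of_countable ftt).comp hαm) 2 fun ω => hfttb _
  -- measurability of sets
  have hα1 : Measurable fun ω => (α ω).1 := hαm.fst
  have hα2 : Measurable fun ω => (α ω).2 := hαm.snd
  have hs1 : MeasurableSet {ω | (α ω).1 = true} := hα1 (measurableSet_singleton true)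
  have hs2 : MeasurableSet {ω | (α ω).2 = true} := hα2 (measurableSet_singleton true)
  have hs12 : MeasurableSet {ω | α ω = (true, true)} :=
    hαm (measurableSet_singleton (true, true))
  -- indicator integrals
  have hIf1 : ∫ ω, f1 (α ω) ∂P = φ1 := by
    rw [hφ1]
    refine bdar_indicator_integral hs1 fun ω => ⟨fun h => ?_, fun h => ?_⟩
    · simp only [Set.mem_setOf_eq] at h; simp [hf1, h]
    · simp only [Set.mem_setOf_eq] at h; simp [hf1, h]
  have hIf2 : ∫ ω, f2 (α ω) ∂P = φ2 := by
    rw [hφ2]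
    refine bdar_indicator_integral hs2 fun ω => ⟨fun h => ?_, fun h => ?_⟩
    · simp only [Set.mem_setOf_eq] at h; simp [hf2, h]
    · simp only [Set.mem_setOf_eq] at h; simp [hf2, h]
  have hIftt : ∫ ω, ftt (α ω) ∂P = φ12 := by
    rw [hφ12]
    refine bdar_indicator_integral hs12 fun ω => ⟨fun h => ?_, fun h => ?_⟩
    · simp only [Set.mem_setOf_eq] at h; simp [hftt, h]
    · simp only [Set.mem_setOf_eq] at h; simp [hftt, h]
  -- mean of Z1
  have hEZ1 : ∫ ω, Z1 ω ∂P = μ1 := by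
    have hdec : ∀ ω, Z1 ω = f1 (α ω) * (q ω).1 + (1 - f1 (α ω)) * (q ω).2.2.1 := by
      intro ω
      rw [hZ1 ω]
      rcases hp : α ω with ⟨a, b⟩
      cases a <;> simp [hf1, hq]
    have h1 : ∫ ω, f1 (α ω) * (q ω).1 ∂P = φ1 * μ1 := by
      rw [bdar_indep_mul hαm hqm hα f1 (fun x => x.1) measurable_fst C1 hC1, hIf1]
      exact congrArg _ hμ1Z
    have h2 : ∫ ω, (1 - f1 (α ω)) * (q ω).2.2.1 ∂P = (1 - φ1) * μ1 := by
      rw [bdar_indep_mul hαm hqm hα (fun p => 1 - f1 p) (fun x => x.2.2.1)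
        (measurable_fst.comp (measurable_snd.comp measurable_snd)) D1 hD1]
      have h3 : ∫ ω, (1 - f1 (α ω)) ∂P = 1 - φ1 := by
        rw [integral_sub (integrable_const 1) hf1int, hIf1]
        simp
      rw [h3]
      exact congrArg _ hμ1ε
    have hint1 : Integrable (fun ω => f1 (α ω) * (q ω).1) P := by
      refine bdar_integrable _ (((measurable_of_countable f1).comp hαm).mul hZ1pm)
        (2 * (|C1| + 1)) fun ω => ?_
      rw [abs_mul]
      exact mul_le_mul (hf1b _) ((hC1 ω).trans (by linarith [le_abs_self C1]))
        (abs_nonneg _) (by norm_num)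
    have hint2 : Integrable (fun ω => (1 - f1 (α ω)) * (q ω).2.2.1) P := by
      refine bdar_integrable _
        ((measurable_const.sub ((measurable_of_countable f1).comp hαm)).mul hε1m)
        (3 * (|D1| + 1)) fun ω => ?_
      rw [abs_mul]
      refine mul_le_mul ?_ ((hD1 ω).trans (by linarith [le_abs_self D1]))
        (abs_nonneg _) (by norm_num)
      calc |1 - f1 (α ω)| ≤ |(1 : ℝ)| + |f1 (α ω)| := abs_sub _ _
        _ ≤ 3 := by have := hf1b (α ω); simp at this ⊢; linarith
    calc ∫ ω, Z1 ω ∂P = ∫ ω, (f1 (α ω) * (q ω).1 + (1 - f1 (α ω)) * (q ω).2.2.1) ∂P :=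
          integral_congr_ae (ae_of_all _ hdec)
      _ = φ1 * μ1 + (1 - φ1) * μ1 := by rw [integral_add hint1 hint2, h1, h2]
      _ = μ1 := by ring
  -- mean of Z2
  have hEZ2 : ∫ ω, Z2 ω ∂P = μ2 := by
    have hdec : ∀ ω, Z2 ω = f2 (α ω) * (q ω).2.1 + (1 - f2 (α ω)) * (q ω).2.2.2 := by
      intro ω
      rw [hZ2 ω]
      rcases hp : α ω with ⟨a, b⟩
      cases b <;> simp [hf2, hq]
    have h1 : ∫ ω, f2 (α ω) * (q ω).2.1 ∂P = φ2 * μ2 := by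
      rw [bdar_indep_mul hαm hqm hα f2 (fun x => x.2.1)
        (measurable_fst.comp measurable_snd) C2 hC2, hIf2]
      exact congrArg _ hμ2Z
    have h2 : ∫ ω, (1 - f2 (α ω)) * (q ω).2.2.2 ∂P = (1 - φ2) * μ2 := by
      rw [bdar_indep_mul hαm hqm hα (fun p => 1 - f2 p) (fun x => x.2.2.2)
        (measurable_snd.comp (measurable_snd.comp measurable_snd)) D2 hD2]
      have h3 : ∫ ω, (1 - f2 (α ω)) ∂P = 1 - φ2 := by
        rw [integral_sub (integrable_const 1) hf2int, hIf2]
        simp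
      rw [h3]
      exact congrArg _ hμ2ε
    have hint1 : Integrable (fun ω => f2 (α ω) * (q ω).2.1) P := by
      refine bdar_integrable _ (((measurable_of_countable f2).comp hαm).mul hZ2pm)
        (2 * (|C2| + 1)) fun ω => ?_
      rw [abs_mul]
      exact mul_le_mul (hf2b _) ((hC2 ω).trans (by linarith [le_abs_self C2]))
        (abs_nonneg _) (by norm_num)
    have hint2 : Integrable (fun ω => (1 - f2 (α ω)) * (q ω).2.2.2) P := by
      refine bdar_integrable _
        ((measurable_const.sub ((measurable_of_countable f2).comp hαm)).mul hε2m)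
        (3 * (|D2| + 1)) fun ω => ?_
      rw [abs_mul]
      refine mul_le_mul ?_ ((hD2 ω).trans (by linarith [le_abs_self D2]))
        (abs_nonneg _) (by norm_num)
      calc |1 - f2 (α ω)| ≤ |(1 : ℝ)| + |f2 (α ω)| := abs_sub _ _
        _ ≤ 3 := by have := hf2b (α ω); simp at this ⊢; linarith
    calc ∫ ω, Z2 ω ∂P = ∫ ω, (f2 (α ω) * (q ω).2.1 + (1 - f2 (α ω)) * (q ω).2.2.2) ∂P :=
          integral_congr_ae (ae_of_all _ hdec)
      _ = φ2 * μ2 + (1 - φ2) * μ2 := by rw [integral_add hint1 hint2, h1, h2]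
      _ = μ2 := by ring
  -- cross moments of independent pairs
  have hε2Z1 : ∫ ω, Z1p ω * ε2 ω ∂P = μ1 * μ2 := by
    have h : IndepFun Z1p ε2 P := (hε.comp measurable_snd measurable_fst).symm
    rw [show (fun ω => Z1p ω * ε2 ω) = Z1p * ε2 from rfl,
      h.integral_mul_eq_mul_integral (bdar_integrable _ hZ1pm C1 hC1).aestronglyMeasurable
      (bdar_integrable _ hε2m D2 hD2).aestronglyMeasurable, hμ1Z, hμ2ε]
  have hε1Z2 : ∫ ω, ε1 ω * Z2p ω ∂P = μ1 * μ2 := by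
    have h : IndepFun ε1 Z2p P := hε.comp measurable_fst measurable_snd
    rw [show (fun ω => ε1 ω * Z2p ω) = ε1 * Z2p from rfl,
      h.integral_mul_eq_mul_integral (bdar_integrable _ hε1m D1 hD1).aestronglyMeasurable
      (bdar_integrable _ hZ2pm C2 hC2).aestronglyMeasurable, hμ1ε, hμ2Z]
  -- pointwise decomposition of Z1 * Z2
  have hdec : ∀ ω, Z1 ω * Z2 ω =
      ftt (α ω) * ((q ω).1 * (q ω).2.1)
      + (f1 (α ω) - ftt (α ω)) * ((q ω).1 * (q ω).2.2.2)
      + (f2 (α ω) - ftt (α ω)) * ((q ω).2.2.1 * (q ω).2.1)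
      + (1 - f1 (α ω) - f2 (α ω) + ftt (α ω)) * ((q ω).2.2.1 * (q ω).2.2.2) := by
    intro ω
    rw [hZ1 ω, hZ2 ω]
    rcases hp : α ω with ⟨a, b⟩
    cases a <;> cases b <;> simp [hf1, hf2, hftt, hq, hp, Prod.ext_iff] <;> ring
  -- bound on products
  have habs2 : ∀ (u v : Ω → ℝ) (Cu Cv : ℝ), (∀ ω, |u ω| ≤ Cu) → (∀ ω, |v ω| ≤ Cv) →
      ∀ ω, |u ω * v ω| ≤ (|Cu| + 1) * (|Cv| + 1) := by
    intro u v Cu Cv hbu hbv ω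
    rw [abs_mul]
    exact mul_le_mul ((hbu ω).trans (by linarith [le_abs_self Cu]))
      ((hbv ω).trans (by linarith [le_abs_self Cv])) (abs_nonneg _) (by positivity)
  -- bounds on indicator combinations
  have hg1b : ∀ p, |f1 p - ftt p| ≤ 5 := by
    intro p
    calc |f1 p - ftt p| ≤ |f1 p| + |ftt p| := abs_sub _ _
      _ ≤ 5 := by have := hf1b p; have := hfttb p; linarith
  have hg2b : ∀ p, |f2 p - ftt p| ≤ 5 := by
    intro p
    calc |f2 p - ftt p| ≤ |f2 p| + |ftt p| := abs_sub _ _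
      _ ≤ 5 := by have := hf2b p; have := hfttb p; linarith
  have hg3b : ∀ p, |1 - f1 p - f2 p + ftt p| ≤ 8 := by
    intro p
    have h1 := hf1b p; have h2 := hf2b p; have h3 := hfttb p
    have := abs_le.1 h1; have := abs_le.1 h2; have := abs_le.1 h3
    rw [abs_le]; constructor <;> linarith
  -- integrability helper for indicator-times-product terms
  have habsf : ∀ (f : Bool × Bool → ℝ) (Cf : ℝ), (∀ p, |f p| ≤ Cf) →
      ∀ (g : Ω → ℝ) (Cg : ℝ), Measurable g → (∀ ω, |g ω| ≤ Cg) →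
      Integrable (fun ω => f (α ω) * g ω) P := by
    intro f Cf hf g Cg hgm hgb
    refine bdar_integrable _ (((measurable_of_countable f).comp hαm).mul hgm)
      ((|Cf| + 1) * (|Cg| + 1)) fun ω => ?_
    rw [abs_mul]
    exact mul_le_mul ((hf _).trans (by linarith [le_abs_self Cf]))
      ((hgb ω).trans (by linarith [le_abs_self Cg])) (abs_nonneg _)
      (by positivity)
  have hint1 : Integrable (fun ω => ftt (α ω) * ((q ω).1 * (q ω).2.1)) P :=
    habsf ftt 2 hfttb _ ((|C1| + 1) * (|C2| + 1)) (hZ1pm.mul hZ2pm)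
      (habs2 Z1p Z2p C1 C2 hC1 hC2)
  have hint2 : Integrable (fun ω => (f1 (α ω) - ftt (α ω)) * ((q ω).1 * (q ω).2.2.2)) P :=
    habsf (fun p => f1 p - ftt p) 5 hg1b _ ((|C1| + 1) * (|D2| + 1)) (hZ1pm.mul hε2m)
      (habs2 Z1p ε2 C1 D2 hC1 hD2)
  have hint3 : Integrable (fun ω => (f2 (α ω) - ftt (α ω)) * ((q ω).2.2.1 * (q ω).2.1)) P :=
    habsf (fun p => f2 p - ftt p) 5 hg2b _ ((|D1| + 1) * (|C2| + 1)) (hε1m.mul hZ2pm)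
      (habs2 ε1 Z2p D1 C2 hD1 hC2)
  have hint4 : Integrable
      (fun ω => (1 - f1 (α ω) - f2 (α ω) + ftt (α ω)) * ((q ω).2.2.1 * (q ω).2.2.2)) P :=
    habsf (fun p => 1 - f1 p - f2 p + ftt p) 8 hg3b _ ((|D1| + 1) * (|D2| + 1))
      (hε1m.mul hε2m) (habs2 ε1 ε2 D1 D2 hD1 hD2)
  -- integrals of indicator combinations
  have hcomb1 : ∫ ω, (f1 (α ω) - ftt (α ω)) ∂P = φ1 - φ12 := by
    rw [integral_sub hf1int hfttint, hIf1, hIftt]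
  have hcomb2 : ∫ ω, (f2 (α ω) - ftt (α ω)) ∂P = φ2 - φ12 := by
    rw [integral_sub hf2int hfttint, hIf2, hIftt]
  have hcomb3 : ∫ ω, (1 - f1 (α ω) - f2 (α ω) + ftt (α ω)) ∂P = 1 - φ1 - φ2 + φ12 := by
    have heq : ∀ ω, (1 - f1 (α ω) - f2 (α ω) + ftt (α ω))
        = (1 - f2 (α ω)) - (f1 (α ω) - ftt (α ω)) := by intro ω; ring
    have hA : Integrable (fun ω => 1 - f2 (α ω)) P := (integrable_const 1).sub hf2int
    have hB : Integrable (fun ω => f1 (α ω) - ftt (α ω)) P := hf1int.sub hfttint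
    rw [integral_congr_ae (ae_of_all _ heq),
      integral_sub hA hB,
      integral_sub (integrable_const 1) hf2int,
      integral_sub hf1int hfttint, hIf1, hIf2, hIftt]
    simp
    ring
  -- the key moment identity
  have hkey : ∫ ω, Z1 ω * Z2 ω ∂P
      = φ12 * (∫ ω, Z1p ω * Z2p ω ∂P) + (φ1 - φ12) * (μ1 * μ2)
        + (φ2 - φ12) * (μ1 * μ2) + (1 - φ1 - φ2 + φ12) * (∫ ω, ε1 ω * ε2 ω ∂P) := by
    rw [integral_congr_ae (ae_of_all _ hdec)]
    have hA1 : Integrable (fun ω => ftt (α ω) * ((q ω).1 * (q ω).2.1)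
        + (f1 (α ω) - ftt (α ω)) * ((q ω).1 * (q ω).2.2.2)) P := hint1.add hint2
    have hA2 : Integrable (fun ω => ftt (α ω) * ((q ω).1 * (q ω).2.1)
        + (f1 (α ω) - ftt (α ω)) * ((q ω).1 * (q ω).2.2.2)
        + (f2 (α ω) - ftt (α ω)) * ((q ω).2.2.1 * (q ω).2.1)) P := hA1.add hint3
    rw [integral_add hA2 hint4, integral_add hA1 hint3, integral_add hint1 hint2]
    rw [show (fun ω => ftt (α ω) * ((q ω).1 * (q ω).2.1))
          = fun ω => ftt (α ω) * (fun x : ℝ × ℝ × ℝ × ℝ => x.1 * x.2.1) (q ω) from rfl,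
      bdar_indep_mul hαm hqm hα ftt (fun x => x.1 * x.2.1)
        (measurable_fst.mul (measurable_fst.comp measurable_snd)) _
        (habs2 Z1p Z2p C1 C2 hC1 hC2)]
    rw [show (fun ω => (f1 (α ω) - ftt (α ω)) * ((q ω).1 * (q ω).2.2.2))
          = fun ω => (fun p => f1 p - ftt p) (α ω)
              * (fun x : ℝ × ℝ × ℝ × ℝ => x.1 * x.2.2.2) (q ω) from rfl,
      bdar_indep_mul hαm hqm hα (fun p => f1 p - ftt p) (fun x => x.1 * x.2.2.2)
        (measurable_fst.mul (measurable_snd.comp (measurable_snd.comp measurable_snd))) _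
        (habs2 Z1p ε2 C1 D2 hC1 hD2)]
    rw [show (fun ω => (f2 (α ω) - ftt (α ω)) * ((q ω).2.2.1 * (q ω).2.1))
          = fun ω => (fun p => f2 p - ftt p) (α ω)
              * (fun x : ℝ × ℝ × ℝ × ℝ => x.2.2.1 * x.2.1) (q ω) from rfl,
      bdar_indep_mul hαm hqm hα (fun p => f2 p - ftt p) (fun x => x.2.2.1 * x.2.1)
        ((measurable_fst.comp (measurable_snd.comp measurable_snd)).mul
          (measurable_fst.comp measurable_snd)) _
        (habs2 ε1 Z2p D1 C2 hD1 hC2)]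
    rw [show (fun ω => (1 - f1 (α ω) - f2 (α ω) + ftt (α ω)) * ((q ω).2.2.1 * (q ω).2.2.2))
          = fun ω => (fun p => 1 - f1 p - f2 p + ftt p) (α ω)
              * (fun x : ℝ × ℝ × ℝ × ℝ => x.2.2.1 * x.2.2.2) (q ω) from rfl,
      bdar_indep_mul hαm hqm hα (fun p => 1 - f1 p - f2 p + ftt p)
        (fun x => x.2.2.1 * x.2.2.2)
        ((measurable_fst.comp (measurable_snd.comp measurable_snd)).mul
          (measurable_snd.comp (measurable_snd.comp measurable_snd))) _
        (habs2 ε1 ε2 D1 D2 hD1 hD2)]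
    have e1 : ∫ ω, (fun x : ℝ × ℝ × ℝ × ℝ => x.1 * x.2.1) (q ω) ∂P
        = ∫ ω, Z1p ω * Z2p ω ∂P := rfl
    have e2 : ∫ ω, (fun x : ℝ × ℝ × ℝ × ℝ => x.1 * x.2.2.2) (q ω) ∂P = μ1 * μ2 := hε2Z1
    have e3 : ∫ ω, (fun x : ℝ × ℝ × ℝ × ℝ => x.2.2.1 * x.2.1) (q ω) ∂P = μ1 * μ2 := hε1Z2
    have e4 : ∫ ω, (fun x : ℝ × ℝ × ℝ × ℝ => x.2.2.1 * x.2.2.2) (q ω) ∂P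
        = ∫ ω, ε1 ω * ε2 ω ∂P := rfl
    rw [e1, e2, e3, e4, hIftt]
    rw [show (∫ ω, (fun p => f1 p - ftt p) (α ω) ∂P)
          = ∫ ω, (f1 (α ω) - ftt (α ω)) ∂P from rfl, hcomb1]
    rw [show (∫ ω, (fun p => f2 p - ftt p) (α ω) ∂P)
          = ∫ ω, (f2 (α ω) - ftt (α ω)) ∂P from rfl, hcomb2]
    rw [show (∫ ω, (fun p => 1 - f1 p - f2 p + ftt p) (α ω) ∂P)
          = ∫ ω, (1 - f1 (α ω) - f2 (α ω) + ftt (α ω)) ∂P from rfl, hcomb3]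
  -- final algebra
  have hne : (1 : ℝ) - φ12 ≠ 0 := by linarith
  rw [hEZ1, hEZ2, eq_div_iff hne, hstat]
  rw [hstat] at hkey
  linear_combination hkey
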